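/- Let M be a symmetric positive definite N×N real matrix, H(x) = √⟨Mx,x⟩, H°(x) = √⟨M⁻¹x,x⟩, and T_H(x) = Mx/⟨Mx,x⟩ on ℝ^N∖{0}. Then for every y ∈ ℝ^N∖{0} and every ξ ∈ ℝ^N, H°(DT_H(y)ξ) = H(ξ)/H(y)². -/

import Mathlib

open Matrix

noncomputable def dotCLM {N : ℕ} : (Fin N → ℝ) →L[ℝ] (Fin N → ℝ) →L[ℝ] ℝ :=
  LinearMap.toContinuousLinearMap
    { toFun := fun x => LinearMap.toContinuousLinearMap
        { toFun := fun z => x ⬝ᵥ z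
          map_add' := fun a b => dotProduct_add x a b
          map_smul' := fun c a => dotProduct_smul c x a }
      map_add' := by
        intro a b; ext z
        simp [add_dotProduct]
      map_smul' := by
        intro c a; ext z
        simp [smul_dotProduct] }

@[simp] theorem dotCLM_apply {N : ℕ} (x z : Fin N → ℝ) : dotCLM x z = x ⬝ᵥ z := rfl

theorem dual_norm_of_kelvin_derivative {N : ℕ}
    (M : Matrix (Fin N) (Fin N) ℝ) (hM : M.PosDef)
    (H Hdual : (Fin N → ℝ) → ℝ)
    (hH : ∀ x, H x = Real.sqrt (M.mulVec x ⬝ᵥ x))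
    (hHdual : ∀ x, Hdual x = Real.sqrt (M⁻¹.mulVec x ⬝ᵥ x))
    (T : (Fin N → ℝ) → (Fin N → ℝ))
    (hT : ∀ x, T x = (M.mulVec x ⬝ᵥ x)⁻¹ • M.mulVec x) :
    ∀ y : Fin N → ℝ, y ≠ 0 → ∀ ξ : Fin N → ℝ,
      Hdual (fderiv ℝ T y ξ) = H ξ / (H y) ^ 2 := by
  intro y hy ξ
  set L : (Fin N → ℝ) →L[ℝ] (Fin N → ℝ) := LinearMap.toContinuousLinearMap M.mulVecLin with hL
  have hLapp : ∀ x, L x = M.mulVec x := fun x => rfl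
  set B : (Fin N → ℝ) →L[ℝ] (Fin N → ℝ) →L[ℝ] ℝ := dotCLM.comp L with hB
  have hBapp : ∀ x z, B x z = M.mulVec x ⬝ᵥ z := fun x z => rfl
  set q : ℝ := M.mulVec y ⬝ᵥ y with hq
  set p : ℝ := M.mulVec y ⬝ᵥ ξ with hp
  set s : ℝ := M.mulVec ξ ⬝ᵥ ξ with hs
  have hsym : Mᵀ = M := hM.1
  have hMsym : ∀ a b : Fin N → ℝ, M.mulVec a ⬝ᵥ b = M.mulVec b ⬝ᵥ a := by
    intro a b
    rw [dotProduct_comm, dotProduct_mulVec, ← mulVec_transpose, hsym, dotProduct_comm]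
  have hqpos : 0 < q := by
    rw [hq, dotProduct_comm]
    simpa using hM.dotProduct_mulVec_pos hy
  have hqne : q ≠ 0 := ne_of_gt hqpos
  have hspos : 0 ≤ s := by
    rw [hs, dotProduct_comm]
    simpa using hM.posSemidef.dotProduct_mulVec_nonneg ξ
  have hf : HasFDerivAt (fun x => B x x)
      ((B y).comp (ContinuousLinearMap.id ℝ _) + B.flip y) y :=
    (B.hasFDerivAt).clm_apply (hasFDerivAt_id y)
  have hinv : HasFDerivAt (fun x : ℝ => x⁻¹)
      (ContinuousLinearMap.smulRight (1 : ℝ →L[ℝ] ℝ) (-(q ^ 2)⁻¹)) q := hasFDerivAt_inv hqne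
  have hg : HasFDerivAt (fun x => (B x x)⁻¹)
      ((ContinuousLinearMap.smulRight (1 : ℝ →L[ℝ] ℝ) (-(q ^ 2)⁻¹)).comp
        ((B y).comp (ContinuousLinearMap.id ℝ _) + B.flip y)) y := hinv.comp y hf
  have hTeq : T = fun x => (B x x)⁻¹ • L x := by
    funext x; rw [hT x]; rfl
  have hDT : HasFDerivAt T
      ((q⁻¹) • L + (((ContinuousLinearMap.smulRight (1 : ℝ →L[ℝ] ℝ) (-(q ^ 2)⁻¹)).comp
        ((B y).comp (ContinuousLinearMap.id ℝ _) + B.flip y))).smulRight (L y)) y := by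
    rw [hTeq]
    have := hg.smul (L.hasFDerivAt (x := y))
    rw [show B y y = q from rfl] at this
    simpa using this
  have hval : fderiv ℝ T y ξ = q⁻¹ • M.mulVec ξ + (-((p + p) / q ^ 2)) • M.mulVec y := by
    rw [hDT.fderiv]
    simp only [ContinuousLinearMap.add_apply, ContinuousLinearMap.smul_apply,
      ContinuousLinearMap.comp_apply, ContinuousLinearMap.smulRight_apply,
      ContinuousLinearMap.coe_id', id_eq, ContinuousLinearMap.one_apply,
      ContinuousLinearMap.flip_apply, hBapp, hLapp, hMsym ξ y, ← hp]
    match_scalars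
    · ring
    · simp only [smul_eq_mul]
      field_simp
  have hMinv : ∀ w : Fin N → ℝ, M⁻¹.mulVec (M.mulVec w) = w := by
    intro w
    rw [mulVec_mulVec, nonsing_inv_mul M ((isUnit_iff_isUnit_det M).mp hM.isUnit), one_mulVec]
  have hdot : M⁻¹.mulVec (q⁻¹ • M.mulVec ξ + (-((p + p) / q ^ 2)) • M.mulVec y) ⬝ᵥ
      (q⁻¹ • M.mulVec ξ + (-((p + p) / q ^ 2)) • M.mulVec y) = s / q ^ 2 := by
    rw [mulVec_add, mulVec_smul, mulVec_smul, hMinv, hMinv]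
    have h1 : ξ ⬝ᵥ M.mulVec ξ = s := by rw [dotProduct_comm]
    have h2 : ξ ⬝ᵥ M.mulVec y = p := by rw [dotProduct_comm]
    have h3 : y ⬝ᵥ M.mulVec ξ = p := by rw [dotProduct_comm, hMsym ξ y]
    have h4 : y ⬝ᵥ M.mulVec y = q := by rw [dotProduct_comm]
    rw [add_dotProduct, smul_dotProduct, smul_dotProduct, dotProduct_add, dotProduct_add,
      dotProduct_smul, dotProduct_smul, dotProduct_smul, dotProduct_smul,
      h1, h2, h3, h4]
    simp only [smul_eq_mul]
    field_simp
    ring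
  rw [hHdual, hval, hdot, hH, hH, ← hs, ← hq,
    Real.sqrt_div hspos, Real.sqrt_sq hqpos.le, Real.sq_sqrt hqpos.le]
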